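/- In the electrical Lie algebra 𝔢_{C_n} (n ≥ 4), with w = u_{1,3} = [e_1, [e_1, [e_2, e_3]]], the following identities hold: [[e_1, e_2], w] = w; [[e_3, e_4], w] = w; [a_{2i+1,j}, w] = 0 for all i, j with j > 2i+1 ≥ 3 and j ≠ 4; and [a_{1,j}, w] = 0 for all j ≥ 3. -/

import Mathlib

noncomputable section

open FreeLieAlgebra Matrix

abbrev FL (n : ℕ) : Type := FreeLieAlgebra ℂ (Fin n)

/-- Defining relations of the type `C` electrical Lie algebra (index `i` ↔ generator
`e_{i+1}`). -/
def relC (n : ℕ) : Set (FL n) :=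
  {x | ∃ i j : Fin n, ((i : ℕ) + 2 ≤ (j : ℕ) ∨ (j : ℕ) + 2 ≤ (i : ℕ)) ∧
        x = ⁅of ℂ i, of ℂ j⁆} ∪
  {x | ∃ i j : Fin n, ((i : ℕ) + 1 = (j : ℕ) ∨ (j : ℕ) + 1 = (i : ℕ)) ∧ (i : ℕ) ≠ 0 ∧
        x = ⁅of ℂ i, ⁅of ℂ i, of ℂ j⁆⁆ + (2 : ℂ) • of ℂ i} ∪
  {x | ∃ i j : Fin n, (i : ℕ) = 0 ∧ (j : ℕ) = 1 ∧
        x = ⁅of ℂ i, ⁅of ℂ i, ⁅of ℂ i, of ℂ j⁆⁆⁆}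

/-- The electrical Lie algebra of type `C_n`. -/
abbrev eC (n : ℕ) : Type := FL n ⧸ LieSubmodule.lieSpan ℂ (FL n) (relC n)

/-- The generator `e_{i+1}` of `eC n`. -/
def gC (n : ℕ) (i : Fin n) : eC n :=
  LieSubmodule.Quotient.mk' (LieSubmodule.lieSpan ℂ (FL n) (relC n)) (of ℂ i)

/-- The generators of `eC n` as a function on `1`-based labels `1, …, n` (and junk value `0`
outside this range). -/
def gC' (n : ℕ) (k : ℕ) : eC n :=
  if h : 1 ≤ k ∧ k ≤ n then gC n ⟨k - 1, by omega⟩ else 0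

/-- `aElt g i j = [g i, [g (i+1), …, [g (j-1), g j]…]]` (right-nested bracket);
`aElt g i j = g i` when `j ≤ i`. -/
def aElt {L : Type*} [LieRing L] (g : ℕ → L) (i j : ℕ) : L :=
  if h : j ≤ i then g i else ⁅g i, aElt g (i + 1) j⁆
termination_by j - i
decreasing_by omega

/-- `uElt g 1 j = [g 1, [g 1, a_{2,j}]]` and `uElt g i j = [g i, uElt g (i-1) j]` for `i ≥ 2`. -/
def uElt {L : Type*} [LieRing L] (g : ℕ → L) : ℕ → ℕ → L
  | 0, _ => 0
  | 1, j => ⁅g 1, ⁅g 1, aElt g 2 j⁆⁆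
  | (i + 2), j => ⁅g (i + 2), uElt g (i + 1) j⁆

-- auxiliary
lemma mk_rel_zero {n : ℕ} {x : FL n} (hx : x ∈ relC n) :
    LieSubmodule.Quotient.mk' (LieSubmodule.lieSpan ℂ (FL n) (relC n)) x = 0 :=
  (LieSubmodule.Quotient.mk_eq_zero _).2 (LieSubmodule.subset_lieSpan hx)

lemma gC'_zero_of {n : ℕ} {k : ℕ} (h : ¬(1 ≤ k ∧ k ≤ n)) : gC' n k = 0 := dif_neg h

lemma commC {n : ℕ} (k l : ℕ) (h : k + 2 ≤ l) : ⁅gC' n k, gC' n l⁆ = 0 := by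
  rcases Nat.eq_zero_or_pos k with hk | hk
  · subst hk; rw [gC'_zero_of (by omega), zero_lie]
  by_cases h2 : l ≤ n
  · have e1 : gC' n k = gC n ⟨k - 1, by omega⟩ := dif_pos ⟨hk, by omega⟩
    have e2 : gC' n l = gC n ⟨l - 1, by omega⟩ := dif_pos ⟨by omega, h2⟩
    rw [e1, e2]
    exact mk_rel_zero (Or.inl (Or.inl
      ⟨⟨k - 1, by omega⟩, ⟨l - 1, by omega⟩, Or.inl (show k - 1 + 2 ≤ l - 1 by omega), rfl⟩))
  · rw [gC'_zero_of (n := n) (k := l) (by omega)]; exact lie_zero (gC' n k)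

lemma serreC {n : ℕ} (k l : ℕ) (h2 : 2 ≤ k) (hkn : k ≤ n) (hl : 1 ≤ l) (hln : l ≤ n)
    (hadj : k + 1 = l ∨ l + 1 = k) :
    ⁅gC' n k, ⁅gC' n k, gC' n l⁆⁆ = -((2 : ℂ) • gC' n k) := by
  have e1 : gC' n k = gC n ⟨k - 1, by omega⟩ := dif_pos ⟨by omega, hkn⟩
  have e2 : gC' n l = gC n ⟨l - 1, by omega⟩ := dif_pos ⟨hl, hln⟩
  rw [e1, e2]
  have h0 := mk_rel_zero (n := n) (Or.inl (Or.inr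
    ⟨⟨k - 1, by omega⟩, ⟨l - 1, by omega⟩,
      (show k - 1 + 1 = l - 1 ∨ l - 1 + 1 = k - 1 by omega),
      (show k - 1 ≠ 0 by omega), rfl⟩))
  rw [map_add, map_smul] at h0
  exact eq_neg_of_add_eq_zero_left h0

lemma serre1C {n : ℕ} (hn : 2 ≤ n) :
    ⁅gC' n 1, ⁅gC' n 1, ⁅gC' n 1, gC' n 2⁆⁆⁆ = 0 := by
  have e1 : gC' n 1 = gC n ⟨0, by omega⟩ := dif_pos ⟨le_refl 1, by omega⟩
  have e2 : gC' n 2 = gC n ⟨1, by omega⟩ := dif_pos ⟨by omega, hn⟩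
  rw [e1, e2]
  exact mk_rel_zero (Or.inr ⟨⟨0, by omega⟩, ⟨1, by omega⟩, rfl, rfl, rfl⟩)

lemma smul_cancel {M : Type*} [AddCommGroup M] [Module ℂ M] {c : ℂ} (hc : c ≠ 0) {a b : M}
    (h : c • a = c • b) : a = b := by
  have := congrArg (fun z => c⁻¹ • z) h
  simpa [smul_smul, inv_mul_cancel₀ hc] using this

section lieCompat
variable {L : Type*} [LieRing L]

lemma lieC_zero (x : L) : ⁅x, (0 : L)⁆ = 0 := by rw [← lie_skew, zero_lie, neg_zero]

lemma lieC_add (x y z : L) : ⁅x, y + z⁆ = ⁅x, y⁆ + ⁅x, z⁆ := by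
  rw [← lie_skew, add_lie, neg_add, lie_skew, lie_skew]

lemma lieC_neg (x y : L) : ⁅x, -y⁆ = -⁅x, y⁆ := by
  rw [← lie_skew, neg_lie, lie_skew]

lemma lieC_sub (x y z : L) : ⁅x, y - z⁆ = ⁅x, y⁆ - ⁅x, z⁆ := by
  rw [sub_eq_add_neg, lieC_add, lieC_neg, ← sub_eq_add_neg]

lemma lieC_smul {R : Type*} [CommRing R] [LieAlgebra R L] (c : R) (x y : L) :
    ⁅x, c • y⁆ = c • ⁅x, y⁆ := by
  rw [← lie_skew, smul_lie, ← smul_neg, lie_skew]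

lemma leibnizC (x y z : L) : ⁅x, ⁅y, z⁆⁆ = ⁅⁅x, y⁆, z⁆ + ⁅y, ⁅x, z⁆⁆ := by
  rw [lie_lie]; abel

end lieCompat

lemma aElt_le {L : Type*} [LieRing L] (g : ℕ → L) {i j : ℕ} (h : j ≤ i) : aElt g i j = g i := by
  rw [aElt, dif_pos h]

lemma aElt_lt {L : Type*} [LieRing L] (g : ℕ → L) {i j : ℕ} (h : i < j) :
    aElt g i j = ⁅g i, aElt g (i + 1) j⁆ := by
  rw [aElt, dif_neg (by omega)]

lemma aElt_succC {n : ℕ} (i j : ℕ) (hij : i ≤ j) :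
    aElt (gC' n) i (j + 1) = ⁅aElt (gC' n) i j, gC' n (j + 1)⁆ := by
  rcases eq_or_lt_of_le hij with h | h
  · subst h
    rw [aElt_lt _ (by omega), aElt_le _ (by omega), aElt_le _ le_rfl]
  · rw [aElt_lt _ (by omega), aElt_succC (i + 1) j h, aElt_lt _ h, leibnizC,
      commC i (j + 1) (by omega), lieC_zero, add_zero]
termination_by j - i

lemma aElt_lie_zero {L : Type*} [LieRing L] (g : ℕ → L) (x : L) (i j : ℕ)
    (h : ∀ m, i ≤ m → ⁅g m, x⁆ = 0) : ⁅aElt g i j, x⁆ = 0 := by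
  by_cases hji : j ≤ i
  · rw [aElt_le _ hji]; exact h i le_rfl
  · rw [aElt_lt _ (by omega), lie_lie, h i le_rfl,
      aElt_lie_zero g x (i + 1) j (fun m hm => h m (by omega)), lieC_zero, lieC_zero, sub_zero]
termination_by j - i

theorem stmt11 (n : ℕ) (hn : 4 ≤ n) :
    (⁅⁅gC' n 1, gC' n 2⁆, uElt (gC' n) 1 3⁆ = uElt (gC' n) 1 3) ∧
    (⁅⁅gC' n 3, gC' n 4⁆, uElt (gC' n) 1 3⁆ = uElt (gC' n) 1 3) ∧
    (∀ i j : ℕ, 3 ≤ 2 * i + 1 → 2 * i + 1 < j → j ≤ n → j ≠ 4 →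
      ⁅aElt (gC' n) (2 * i + 1) j, uElt (gC' n) 1 3⁆ = 0) ∧
    (∀ j : ℕ, 3 ≤ j → j ≤ n → ⁅aElt (gC' n) 1 j, uElt (gC' n) 1 3⁆ = 0) := by
  have c13 : ⁅gC' n 1, gC' n 3⁆ = 0 := commC 1 3 (by omega)
  have c14 : ⁅gC' n 1, gC' n 4⁆ = 0 := commC 1 4 (by omega)
  have c24 : ⁅gC' n 2, gC' n 4⁆ = 0 := commC 2 4 (by omega)
  have c31 : ⁅gC' n 3, gC' n 1⁆ = 0 := by
    rw [← lie_skew (gC' n 3) (gC' n 1), c13, neg_zero]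
  have c41 : ⁅gC' n 4, gC' n 1⁆ = 0 := by
    rw [← lie_skew (gC' n 4) (gC' n 1), c14, neg_zero]
  have c42 : ⁅gC' n 4, gC' n 2⁆ = 0 := by
    rw [← lie_skew (gC' n 4) (gC' n 2), c24, neg_zero]
  have s21 : ⁅gC' n 2, ⁅gC' n 2, gC' n 1⁆⁆ = -((2:ℂ) • gC' n 2) :=
    serreC 2 1 le_rfl (by omega) le_rfl (by omega) (Or.inr rfl)
  have s23 : ⁅gC' n 2, ⁅gC' n 2, gC' n 3⁆⁆ = -((2:ℂ) • gC' n 2) :=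
    serreC 2 3 le_rfl (by omega) (by omega) (by omega) (Or.inl rfl)
  have s32 : ⁅gC' n 3, ⁅gC' n 3, gC' n 2⁆⁆ = -((2:ℂ) • gC' n 3) :=
    serreC 3 2 (by omega) (by omega) (by omega) (by omega) (Or.inr rfl)
  have s34 : ⁅gC' n 3, ⁅gC' n 3, gC' n 4⁆⁆ = -((2:ℂ) • gC' n 3) :=
    serreC 3 4 (by omega) (by omega) (by omega) (by omega) (Or.inl rfl)
  have s1 : ⁅gC' n 1, ⁅gC' n 1, ⁅gC' n 1, gC' n 2⁆⁆⁆ = 0 := serre1C (by omega)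
  set t := ⁅gC' n 1, gC' n 2⁆ with ht
  set y := ⁅gC' n 2, gC' n 3⁆ with hy
  set s := ⁅gC' n 1, t⁆ with hs
  set p := ⁅gC' n 1, y⁆ with hp
  set w := ⁅gC' n 1, p⁆ with hw
  set r := ⁅gC' n 3, gC' n 4⁆ with hr
  have hu : uElt (gC' n) 1 3 = w := by
    show ⁅gC' n 1, ⁅gC' n 1, aElt (gC' n) 2 3⁆⁆ = w
    rw [aElt_lt _ (show (2:ℕ) < 3 by omega), aElt_le _ (show (3:ℕ) ≤ 3 by omega), ← hy, ← hp,
      ← hw]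
  rw [hu]
  have f_e2t : ⁅gC' n 2, t⁆ = (2:ℂ) • gC' n 2 := by
    rw [ht, ← lie_skew (gC' n 1) (gC' n 2), lieC_neg, s21, neg_neg]
  have f_e3t : ⁅gC' n 3, t⁆ = -p := by
    rw [ht, leibnizC, c31, zero_lie, ← lie_skew (gC' n 3) (gC' n 2), lieC_neg, ← hy, ← hp,
      zero_add]
  have hpt : p = ⁅t, gC' n 3⁆ := by
    rw [hp, hy, leibnizC, c13, lieC_zero, add_zero, ← ht]
  have hws : w = ⁅s, gC' n 3⁆ := by
    rw [hw, hpt, leibnizC, c13, lieC_zero, add_zero, ← hs]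
  have f_e3y : ⁅gC' n 3, y⁆ = (2:ℂ) • gC' n 3 := by
    rw [hy, ← lie_skew (gC' n 2) (gC' n 3), lieC_neg, s32, neg_neg]
  have f_e2s : ⁅gC' n 2, s⁆ = (2:ℂ) • t := by
    rw [hs, leibnizC, ← lie_skew (gC' n 2) (gC' n 1), ← ht, neg_lie, lie_self, neg_zero,
      zero_add, f_e2t, lieC_smul, ← ht]
  have f_e3p : ⁅gC' n 3, p⁆ = 0 := by
    rw [hp, leibnizC, c31, zero_lie, zero_add, f_e3y, lieC_smul, c13, smul_zero]
  have f_e3s : ⁅gC' n 3, s⁆ = -w := by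
    rw [hs, leibnizC, c31, zero_lie, zero_add, f_e3t, lieC_neg, ← hw]
  have f_e1w : ⁅gC' n 1, w⁆ = 0 := by
    rw [hws, leibnizC, s1, zero_lie, c13, lieC_zero, add_zero]
  have f_e3w : ⁅gC' n 3, w⁆ = 0 := by
    rw [hw, leibnizC, c31, zero_lie, zero_add, f_e3p, lieC_zero]
  have h1 : ⁅gC' n 2, p⁆ = (2:ℂ) • y + ⁅t, y⁆ := by
    conv_lhs => rw [hpt, leibnizC]
    rw [f_e2t, smul_lie, ← hy]
  have h2 : ⁅t, y⁆ = -((2:ℂ) • t) - ⁅gC' n 2, p⁆ := by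
    conv_lhs => rw [ht, lie_lie]
    rw [s23, lieC_neg, lieC_smul, ← ht, ← hp]
  rw [h1] at h2
  have f_ty : ⁅t, y⁆ = -t - y := by
    have h8 : (2:ℂ) • ⁅t, y⁆ - (2:ℂ) • (-t - y)
        = ⁅t, y⁆ - (-((2:ℂ) • t) - ((2:ℂ) • y + ⁅t, y⁆)) := by module
    exact smul_cancel two_ne_zero (sub_eq_zero.mp (h8.trans (sub_eq_zero_of_eq h2)))
  have f_e2p : ⁅gC' n 2, p⁆ = y - t := by rw [h1, f_ty]; module
  have h_tp : ⁅t, p⁆ = p - s - ⁅gC' n 2, w⁆ := by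
    conv_lhs => rw [ht, lie_lie]
    rw [f_e2p, lieC_sub, ← hp, ← hs, ← hw]
  have f_sy : ⁅s, y⁆ = ⁅gC' n 2, w⁆ - (2:ℂ) • p := by
    conv_lhs => rw [hs, lie_lie]
    rw [f_ty, lieC_sub, lieC_neg, ← hs, ← hp, h_tp]
    module
  have h_e1sy : ⁅gC' n 1, ⁅s, y⁆⁆ = ⁅s, p⁆ := by
    rw [leibnizC, s1, zero_lie, zero_add, ← hp]
  have h_e1m : ⁅gC' n 1, ⁅gC' n 2, w⁆⁆ = ⁅t, w⁆ := by
    rw [leibnizC, f_e1w, lieC_zero, add_zero, ← ht]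
  have h_sp1 : ⁅s, p⁆ = ⁅t, w⁆ - (2:ℂ) • w := by
    rw [← h_e1sy, f_sy, lieC_sub, lieC_smul, h_e1m, ← hw]
  have h_tw1 : ⁅t, w⁆ = -⁅s, p⁆ + (w - 0 - ⁅t, w⁆) := by
    conv_lhs => rw [hw, leibnizC]
    rw [← lie_skew t (gC' n 1), ← hs, neg_lie, h_tp, lieC_sub, lieC_sub, ← hw, s1, h_e1m]
  rw [h_sp1] at h_tw1
  have claim1 : ⁅t, w⁆ = w := by
    have h8 : (3:ℂ) • ⁅t, w⁆ - (3:ℂ) • w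
        = ⁅t, w⁆ - (-(⁅t, w⁆ - (2:ℂ) • w) + (w - 0 - ⁅t, w⁆)) := by module
    exact smul_cancel three_ne_zero (sub_eq_zero.mp (h8.trans (sub_eq_zero_of_eq h_tw1)))
  have f_sp : ⁅s, p⁆ = -w := by rw [h_sp1, claim1]; module
  have f_e4t : ⁅gC' n 4, t⁆ = 0 := by
    rw [ht, leibnizC, c41, zero_lie, c42, lieC_zero, zero_add]
  have f_e4s : ⁅gC' n 4, s⁆ = 0 := by
    rw [hs, leibnizC, c41, zero_lie, f_e4t, lieC_zero, zero_add]
  have f_rs : ⁅r, s⁆ = ⁅gC' n 4, w⁆ := by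
    rw [hr, lie_lie, f_e4s, lieC_zero, f_e3s, lieC_neg, zero_sub, neg_neg]
  have f_re3 : ⁅r, gC' n 3⁆ = (2:ℂ) • gC' n 3 := by
    rw [← lie_skew r (gC' n 3), s34, neg_neg]
  have f_we3 : ⁅w, gC' n 3⁆ = 0 := by rw [← lie_skew w (gC' n 3), f_e3w, neg_zero]
  have f_e4e3 : ⁅gC' n 4, gC' n 3⁆ = -r := by
    rw [← lie_skew (gC' n 4) (gC' n 3), ← hr]
  have h_e4w_e3 : ⁅⁅gC' n 4, w⁆, gC' n 3⁆ = -⁅r, w⁆ := by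
    rw [lie_lie, f_we3, lieC_zero, f_e4e3, lieC_neg, ← lie_skew w r]
    module
  have hc2 : ⁅r, w⁆ = -⁅r, w⁆ + (2:ℂ) • w := by
    conv_lhs => rw [hws, leibnizC]
    rw [f_rs, h_e4w_e3, f_re3, lieC_smul, ← hws]
  have claim2 : ⁅r, w⁆ = w := by
    have h8 : (2:ℂ) • ⁅r, w⁆ - (2:ℂ) • w = ⁅r, w⁆ - (-⁅r, w⁆ + (2:ℂ) • w) := by module
    exact smul_cancel two_ne_zero (sub_eq_zero.mp (h8.trans (sub_eq_zero_of_eq hc2)))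
  have f_pw : ⁅p, w⁆ = 0 := by
    conv_lhs => rw [hpt, lie_lie]
    rw [f_e3w, lieC_zero, claim1, f_e3w, sub_zero]
  have f_te4 : ⁅t, gC' n 4⁆ = 0 := by rw [← lie_skew t (gC' n 4), f_e4t, neg_zero]
  have f_tr : ⁅t, r⁆ = ⁅p, gC' n 4⁆ := by
    rw [hr, leibnizC, ← hpt, f_te4, lieC_zero, add_zero]
  have f_ye4 : ⁅y, gC' n 4⁆ = ⁅gC' n 2, r⁆ := by
    rw [hy, lie_lie, ← hr, c24, lieC_zero, sub_zero]
  have f_e4y : ⁅gC' n 4, y⁆ = -⁅gC' n 2, r⁆ := by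
    rw [← lie_skew (gC' n 4) y, f_ye4]
  have f_e1r : ⁅gC' n 1, r⁆ = 0 := by
    rw [hr, leibnizC, c13, zero_lie, c14, lieC_zero, zero_add]
  have f_e3e2 : ⁅gC' n 3, gC' n 2⁆ = -y := by
    rw [← lie_skew (gC' n 3) (gC' n 2), ← hy]
  have f_e3q : ⁅gC' n 3, ⁅gC' n 2, r⁆⁆ = ⁅r, y⁆ - (2:ℂ) • y := by
    rw [leibnizC, f_e3e2, neg_lie, lie_skew r y, s34, lieC_neg, lieC_smul, ← hy]
    module
  have hry : ⁅r, y⁆ = -(⁅r, y⁆ - (2:ℂ) • y) - (2:ℂ) • (-r) := by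
    conv_lhs => rw [hr, lie_lie]
    rw [f_e4y, lieC_neg, f_e3q, f_e3y, lieC_smul, f_e4e3]
  have f_ry : ⁅r, y⁆ = y + r := by
    have h8 : (2:ℂ) • ⁅r, y⁆ - (2:ℂ) • (y + r)
        = ⁅r, y⁆ - (-(⁅r, y⁆ - (2:ℂ) • y) - (2:ℂ) • (-r)) := by module
    exact smul_cancel two_ne_zero (sub_eq_zero.mp (h8.trans (sub_eq_zero_of_eq hry)))
  have f_pe4 : ⁅p, gC' n 4⁆ = ⁅gC' n 1, ⁅gC' n 2, r⁆⁆ := by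
    rw [hp, lie_lie, f_ye4, c14, lieC_zero, sub_zero]
  have f_e3pe4 : ⁅gC' n 3, ⁅p, gC' n 4⁆⁆ = -p := by
    rw [f_pe4, leibnizC, c31, zero_lie, zero_add, f_e3q, f_ry, lieC_sub, lieC_add, f_e1r,
      lieC_smul, ← hp]
    module
  have f_pr : ⁅p, r⁆ = -p := by
    conv_lhs => rw [hpt, lie_lie]
    rw [s34, lieC_neg, lieC_smul, ← hpt, f_tr, f_e3pe4]
    module
  have f_ps : ⁅p, s⁆ = w := by
    rw [← lie_skew p s, f_sp, neg_neg]
  have f_a14w : ⁅⁅p, gC' n 4⁆, w⁆ = 0 := by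
    rw [lie_lie, f_pw, lieC_zero, sub_zero, ← f_rs, leibnizC, f_pr, neg_lie, f_ps, claim2]
    module
  have f_mw : ∀ m, 5 ≤ m → ⁅gC' n m, w⁆ = 0 := by
    intro m hm
    have c1 : ⁅gC' n m, gC' n 1⁆ = 0 := by
      rw [← lie_skew (gC' n m) (gC' n 1), commC 1 m (by omega), neg_zero]
    have c2 : ⁅gC' n m, gC' n 2⁆ = 0 := by
      rw [← lie_skew (gC' n m) (gC' n 2), commC 2 m (by omega), neg_zero]
    have c3 : ⁅gC' n m, gC' n 3⁆ = 0 := by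
      rw [← lie_skew (gC' n m) (gC' n 3), commC 3 m (by omega), neg_zero]
    have cy : ⁅gC' n m, y⁆ = 0 := by
      rw [hy, leibnizC, c2, zero_lie, c3, lieC_zero, zero_add]
    have cp : ⁅gC' n m, p⁆ = 0 := by
      rw [hp, leibnizC, c1, zero_lie, cy, lieC_zero, zero_add]
    rw [hw, leibnizC, c1, zero_lie, cp, lieC_zero, zero_add]
  have H3 : ∀ j, 5 ≤ j → ⁅aElt (gC' n) 3 j, w⁆ = 0 := by
    intro j hj
    induction j, hj using Nat.le_induction with
    | base =>
      have h45 : aElt (gC' n) 3 5 = ⁅aElt (gC' n) 3 4, gC' n 5⁆ := aElt_succC 3 4 (by omega)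
      have h34 : aElt (gC' n) 3 4 = r := by
        rw [aElt_lt _ (show (3:ℕ) < 4 by omega), aElt_le _ (show (4:ℕ) ≤ 4 by omega), ← hr]
      rw [h45, h34, lie_lie, f_mw 5 (by omega), lieC_zero, claim2, f_mw 5 (by omega), sub_zero]
    | succ j hj ih =>
      rw [aElt_succC 3 j (by omega), lie_lie, f_mw (j + 1) (by omega), lieC_zero, ih,
        lieC_zero, sub_zero]
  have H4 : ∀ j, 3 ≤ j → ⁅aElt (gC' n) 1 j, w⁆ = 0 := by
    have h13 : aElt (gC' n) 1 3 = p := by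
      rw [aElt_lt _ (show (1:ℕ) < 3 by omega), aElt_lt _ (show (2:ℕ) < 3 by omega),
        aElt_le _ (show (3:ℕ) ≤ 3 by omega), ← hy, ← hp]
    intro j hj
    induction j, hj using Nat.le_induction with
    | base => rw [h13]; exact f_pw
    | succ j hj ih =>
      rw [aElt_succC 1 j (by omega)]
      by_cases hj3 : j = 3
      · subst hj3; rw [h13]; exact f_a14w
      · rw [lie_lie, f_mw (j + 1) (by omega), lieC_zero, ih, lieC_zero, sub_zero]
  refine ⟨claim1, claim2, ?_, ?_⟩
  · intro i j h1' h2' h3' h4'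
    rcases Nat.lt_or_ge (2 * i + 1) 5 with hlt | hge
    · have hi : i = 1 := by omega
      subst hi
      exact H3 j (by omega)
    · exact aElt_lie_zero _ _ _ _ (fun m hm => f_mw m (by omega))
  · intro j hj _
    exact H4 j hj
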